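/- Fourth conditional Ingleton inequality [4cI]: let ξ_X, ξ_Y, ξ_Z, ξ_U be discrete random variables with nonempty finite ranges on a common probability space, and let h be the entropy function assigning to each subset S of {X, Y, Z, U} the Shannon entropy of the joint distribution of (ξ_i)_{i∈S}. If ξ_X ⊥ ξ_Z | ξ_U and ξ_Z ⊥ ξ_U | ξ_X, then □h(X,Y) ≥ 0. -/

import Mathlib

open MeasureTheory

/-- The probability that the discrete random variable `f` takes the value `x`. -/
noncomputable def probOf {Ω S : Type*} [MeasurableSpace Ω] (μ : Measure Ω)
    (f : Ω → S) (x : S) : ℝ :=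
  (μ {ω | f ω = x}).toReal

/-- The Shannon entropy `−Σ_x p(x)·ln p(x)` of the distribution of a discrete
random variable `f` with finite range `S`. -/
noncomputable def entropyOf {Ω S : Type*} [MeasurableSpace Ω] [Fintype S]
    (μ : Measure Ω) (f : Ω → S) : ℝ :=
  ∑ x : S, Real.negMulLog (probOf μ f x)

/-- Conditional independence of discrete random variables:
`P(f = a, g = b, k = c) · P(k = c) = P(f = a, k = c) · P(g = b, k = c)` for all values. -/
def CondIndepRV {Ω A B C : Type*} [MeasurableSpace Ω] (μ : Measure Ω)
    (f : Ω → A) (g : Ω → B) (k : Ω → C) : Prop :=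
  ∀ (a : A) (b : B) (c : C),
    μ {ω | f ω = a ∧ g ω = b ∧ k ω = c} * μ {ω | k ω = c} =
    μ {ω | f ω = a ∧ k ω = c} * μ {ω | g ω = b ∧ k ω = c}

/-- Unconditional independence: the case of a constant conditioning variable. -/
def IndepRV {Ω A B : Type*} [MeasurableSpace Ω] (μ : Measure Ω)
    (f : Ω → A) (g : Ω → B) : Prop :=
  CondIndepRV μ f g (fun _ => ())

/-- The Ingleton expression □h(X,Y) for the entropy function `h` of the four
discrete random variables `ξX, ξY, ξZ, ξU` (entropies of joint sub-vectors). -/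
noncomputable def ingletonEnt {Ω SX SY SZ SU : Type*} [MeasurableSpace Ω]
    [Fintype SX] [Fintype SY] [Fintype SZ] [Fintype SU] (μ : Measure Ω)
    (ξX : Ω → SX) (ξY : Ω → SY) (ξZ : Ω → SZ) (ξU : Ω → SU) : ℝ :=
  - entropyOf μ (fun ω => (ξX ω, ξY ω)) + entropyOf μ (fun ω => (ξX ω, ξZ ω))
  + entropyOf μ (fun ω => (ξX ω, ξU ω)) + entropyOf μ (fun ω => (ξY ω, ξZ ω))
  + entropyOf μ (fun ω => (ξY ω, ξU ω)) + entropyOf μ (fun ω => (ξZ ω, ξU ω))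
  - entropyOf μ ξZ - entropyOf μ ξU
  - entropyOf μ (fun ω => (ξX ω, ξZ ω, ξU ω)) - entropyOf μ (fun ω => (ξY ω, ξZ ω, ξU ω))


namespace CIng4
open Finset Real Relation MeasureTheory


variable {α : Type*} [Fintype α] {w : α → ℝ}

open scoped Classical in
noncomputable def pS (w : α → ℝ) {β : Type*} (f : α → β) (b : β) : ℝ :=
  ∑ a : α, if f a = b then w a else 0

noncomputable def Hw (w : α → ℝ) {β : Type*} [Fintype β] (f : α → β) : ℝ :=
  ∑ b : β, Real.negMulLog (pS w f b)

lemma pS_nonneg (hw : ∀ a, 0 ≤ w a) {β : Type*} (f : α → β) (b : β) : 0 ≤ pS w f b := by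
  classical
  refine Finset.sum_nonneg fun a _ => ?_
  split_ifs <;> simp [hw a]

lemma pS_congr {β γ : Type*} {f : α → β} {g : α → γ} {b : β} {c : γ}
    (h : ∀ a, f a = b ↔ g a = c) : pS w f b = pS w g c := by
  classical
  refine Finset.sum_congr rfl fun a _ => ?_
  exact if_congr (h a) rfl rfl

lemma pS_mono (hw : ∀ a, 0 ≤ w a) {β γ : Type*} {f : α → β} {g : α → γ} {b : β} {c : γ}
    (h : ∀ a, f a = b → g a = c) : pS w f b ≤ pS w g c := by
  classical
  refine Finset.sum_le_sum fun a _ => ?_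
  by_cases hf : f a = b
  · rw [if_pos hf, if_pos (h a hf)]
  · rw [if_neg hf]; split_ifs <;> simp [hw a]

lemma pS_eq_zero (hw : ∀ a, 0 ≤ w a) {β γ : Type*} {f : α → β} {g : α → γ} {b : β} {c : γ}
    (h : ∀ a, f a = b → g a = c) (hg : pS w g c = 0) : pS w f b = 0 :=
  le_antisymm (hg ▸ pS_mono hw h) (pS_nonneg hw f b)

lemma pS_eq_zero_of_none {β : Type*} {f : α → β} {b : β}
    (h : ∀ a, f a ≠ b) : pS w f b = 0 := by
  classical
  refine Finset.sum_eq_zero fun a _ => ?_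
  rw [if_neg (h a)]

lemma le_pS (hw : ∀ a, 0 ≤ w a) {β : Type*} (f : α → β) (a : α) : w a ≤ pS w f (f a) := by
  classical
  have := Finset.single_le_sum (f := fun a' => if f a' = f a then w a' else 0)
    (fun a' _ => by split_ifs <;> simp [hw a']) (Finset.mem_univ a)
  rw [if_pos rfl] at this
  exact this.trans_eq (by unfold pS; convert rfl)

lemma marg_fst {β γ : Type*} [Fintype β] (f : α → β) (g : α → γ) (c : γ) :
    ∑ b : β, pS w (fun a => (f a, g a)) (b, c) = pS w g c := by
  classical
  unfold pS
  rw [Finset.sum_comm]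
  refine Finset.sum_congr rfl fun a _ => ?_
  by_cases h : g a = c <;>
    simp [Prod.ext_iff, h, ite_and, Finset.sum_ite_eq]

lemma marg_snd {β γ : Type*} [Fintype γ] (f : α → β) (g : α → γ) (b : β) :
    ∑ c : γ, pS w (fun a => (f a, g a)) (b, c) = pS w f b := by
  classical
  unfold pS
  rw [Finset.sum_comm]
  refine Finset.sum_congr rfl fun a _ => ?_
  by_cases h : f a = b <;>
    simp [Prod.ext_iff, h, ite_and, Finset.sum_ite_eq]

lemma marg_mid {β γ δ : Type*} [Fintype γ] (f : α → β) (g : α → γ) (k : α → δ)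
    (b : β) (d : δ) :
    ∑ c : γ, pS w (fun a => (f a, (g a, k a))) (b, (c, d)) = pS w (fun a => (f a, k a)) (b, d) := by
  classical
  unfold pS
  rw [Finset.sum_comm]
  refine Finset.sum_congr rfl fun a _ => ?_
  by_cases h1 : f a = b <;> by_cases h2 : k a = d <;>
    simp [Prod.ext_iff, h1, h2, ite_and, Finset.sum_ite_eq]

/-- Relabelling by an equivalence of value spaces does not change entropy. -/
lemma Hw_congr {β γ : Type*} [Fintype β] [Fintype γ] (e : β ≃ γ) (f : α → β) :
    Hw w (fun a => e (f a)) = Hw w f := by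
  unfold Hw
  rw [← Equiv.sum_comp e (fun c => Real.negMulLog (pS w (fun a => e (f a)) c))]
  refine Finset.sum_congr rfl fun b _ => ?_
  congr 1
  exact pS_congr fun a => e.apply_eq_iff_eq

/-- Adjoining a variable that is a function of `f` (a.e. w.r.t. `w`) does not change entropy. -/
lemma Hw_pair_of_func {β γ : Type*} [Fintype β] [Fintype γ] (f : α → β) (g : α → γ)
    (φ : β → γ) (h : ∀ a, w a ≠ 0 → g a = φ (f a)) :
    Hw w (fun a => (f a, g a)) = Hw w f := by
  classical
  unfold Hw
  rw [Fintype.sum_prod_type]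
  refine Finset.sum_congr rfl fun b _ => ?_
  rw [Finset.sum_eq_single (φ b)]
  · congr 1
    unfold pS
    refine Finset.sum_congr rfl fun a _ => ?_
    by_cases hwa : w a = 0
    · split_ifs <;> simp [hwa]
    · have hg := h a hwa
      by_cases hf : f a = b
      · simp [Prod.ext_iff, hf, hg]
      · simp [Prod.ext_iff, hf]
  · intro c _ hc
    have hz : pS w (fun a => (f a, g a)) (b, c) = 0 := by
      classical
      unfold pS
      refine Finset.sum_eq_zero fun a _ => ?_
      by_cases hwa : w a = 0
      · split_ifs <;> simp [hwa]
      · refine if_neg fun hcond => ?_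
        rw [Prod.mk.injEq] at hcond
        exact hc (by rw [← hcond.2, h a hwa, hcond.1])
    simp [hz]
  · intro hmem; exact absurd (Finset.mem_univ _) hmem

lemma sum_sum_mul_div {β γ : Type*} [Fintype β] [Fintype γ] (A : β → ℝ) (B : γ → ℝ) (Q : ℝ) :
    ∑ b, ∑ c, A b * B c / Q = (∑ b, A b) * (∑ c, B c) / Q := by
  calc ∑ b, ∑ c, A b * B c / Q = ∑ b, A b * (∑ c, B c) / Q := by
        refine Finset.sum_congr rfl fun b _ => ?_
        rw [← Finset.sum_div, ← Finset.mul_sum]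
    _ = (∑ b, A b) * (∑ c, B c) / Q := by rw [← Finset.sum_div, ← Finset.sum_mul]

lemma negMulLog_mul_div {x y z : ℝ} (hx : 0 ≤ x) (hy : 0 ≤ y) (hz : 0 < z) :
    negMulLog (x * y / z) =
      y / z * negMulLog x + x / z * negMulLog y - x * y / (z * z) * negMulLog z := by
  rcases eq_or_lt_of_le hx with h | hx'
  · simp [← h, negMulLog]
  rcases eq_or_lt_of_le hy with h | hy'
  · simp [← h, negMulLog]
  have hlog : log (x * y / z) = log x + log y - log z := by
    rw [Real.log_div (by positivity) hz.ne', Real.log_mul hx'.ne' hy'.ne']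
  simp only [negMulLog]
  rw [hlog]
  field_simp
  ring

lemma gibbs_le {β γ : Type*} [Fintype β] [Fintype γ] (A : β → ℝ) (B : γ → ℝ)
    (C : β → γ → ℝ) (P : ℝ) (hC0 : ∀ b c, 0 ≤ C b c)
    (hA : ∀ b, A b = ∑ c, C b c) (hB : ∀ c, B c = ∑ b, C b c) (hP : P = ∑ b, A b) :
    (∑ b, ∑ c, negMulLog (C b c)) + negMulLog P ≤
      (∑ b, negMulLog (A b)) + ∑ c, negMulLog (B c) := by
  have hA0 : ∀ b, 0 ≤ A b := fun b => (hA b) ▸ Finset.sum_nonneg fun c _ => hC0 b c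
  have hB0 : ∀ c, 0 ≤ B c := fun c => (hB c) ▸ Finset.sum_nonneg fun b _ => hC0 b c
  have hP0 : 0 ≤ P := hP ▸ Finset.sum_nonneg fun b _ => hA0 b
  have hCA : ∀ b c, C b c ≤ A b := fun b c =>
    (hA b) ▸ Finset.single_le_sum (fun c _ => hC0 b c) (Finset.mem_univ c)
  have hCB : ∀ b c, C b c ≤ B c := fun b c =>
    (hB c) ▸ Finset.single_le_sum (fun b _ => hC0 b c) (Finset.mem_univ b)
  have hAP : ∀ b, A b ≤ P := fun b =>
    hP ▸ Finset.single_le_sum (fun b _ => hA0 b) (Finset.mem_univ b)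
  have hPB : P = ∑ c, B c := by
    rw [hP]; simp only [hA, hB]; exact Finset.sum_comm
  have eA : ∑ b, negMulLog (A b) = ∑ b, ∑ c, C b c * (-log (A b)) := by
    refine Finset.sum_congr rfl fun b _ => ?_
    rw [← Finset.sum_mul, ← hA b, negMulLog]; ring
  have eB : ∑ c, negMulLog (B c) = ∑ b, ∑ c, C b c * (-log (B c)) := by
    rw [Finset.sum_comm]
    refine Finset.sum_congr rfl fun c _ => ?_
    rw [← Finset.sum_mul, ← hB c, negMulLog]; ring
  have eP : negMulLog P = ∑ b, ∑ c, C b c * (-log P) := by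
    have hCtot : ∑ b, ∑ c, C b c = P := by
      rw [hP]; exact Finset.sum_congr rfl fun b _ => (hA b).symm
    calc negMulLog P = (∑ b, ∑ c, C b c) * (-log P) := by rw [hCtot, negMulLog]; ring
      _ = ∑ b, ∑ c, C b c * (-log P) := by
          rw [Finset.sum_mul]; exact Finset.sum_congr rfl fun b _ => by rw [Finset.sum_mul]
  have bound : ∀ b c, negMulLog (C b c) + C b c * (-log P) - C b c * (-log (A b))
      - C b c * (-log (B c)) ≤ A b * B c / P - C b c := by
    intro b c
    rcases eq_or_lt_of_le (hC0 b c) with hC | hC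
    · rw [← hC]
      simp [negMulLog]
      exact div_nonneg (mul_nonneg (hA0 b) (hB0 c)) hP0
    · have hApos : 0 < A b := lt_of_lt_of_le hC (hCA b c)
      have hBpos : 0 < B c := lt_of_lt_of_le hC (hCB b c)
      have hPpos : 0 < P := lt_of_lt_of_le hApos (hAP b)
      have ht : 0 < A b * B c / (C b c * P) := by positivity
      have hlog := Real.log_le_sub_one_of_pos ht
      have hlogsplit : log (A b * B c / (C b c * P)) = log (A b) + log (B c) - log (C b c) - log P := by
        rw [Real.log_div (by positivity) (by positivity), Real.log_mul hApos.ne' hBpos.ne',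
          Real.log_mul hC.ne' hPpos.ne']
        ring
      have e1 : negMulLog (C b c) + C b c * (-log P) - C b c * (-log (A b))
          - C b c * (-log (B c)) = C b c * log (A b * B c / (C b c * P)) := by
        rw [hlogsplit, negMulLog]; ring
      have key : C b c * (A b * B c / (C b c * P) - 1) = A b * B c / P - C b c := by
        field_simp
      rw [e1, ← key]
      exact mul_le_mul_of_nonneg_left hlog hC.le
  have total : ∑ b, ∑ c, (A b * B c / P - C b c) = 0 := by
    have h1 : ∑ b, ∑ c, A b * B c / P = P := by
      rw [sum_sum_mul_div, ← hP, ← hPB]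
      rcases eq_or_ne P 0 with h | h
      · simp [h]
      · field_simp
    have h2 : ∑ b, ∑ c, C b c = P := by
      rw [hP]; exact Finset.sum_congr rfl fun b _ => (hA b).symm
    simp only [Finset.sum_sub_distrib]
    rw [h1, h2]; ring
  have main : ∑ b, ∑ c, (negMulLog (C b c) + C b c * (-log P) - C b c * (-log (A b))
      - C b c * (-log (B c))) ≤ 0 := by
    refine le_trans (Finset.sum_le_sum fun b _ => Finset.sum_le_sum fun c _ => bound b c)
      (le_of_eq total)
  simp only [Finset.sum_add_distrib, Finset.sum_sub_distrib] at main
  rw [eA, eB, eP]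
  linarith

lemma gibbs_eq {β γ : Type*} [Fintype β] [Fintype γ] (A : β → ℝ) (B : γ → ℝ)
    (C : β → γ → ℝ) (P : ℝ) (hA0 : ∀ b, 0 ≤ A b) (hB0 : ∀ c, 0 ≤ B c) (hP : 0 < P)
    (hC : ∀ b c, C b c = A b * B c / P) (hsA : ∑ b, A b = P) (hsB : ∑ c, B c = P) :
    ∑ b, ∑ c, negMulLog (C b c) =
      (∑ b, negMulLog (A b)) + (∑ c, negMulLog (B c)) - negMulLog P := by
  have step : ∑ b, ∑ c, negMulLog (C b c) = ∑ b, ∑ c,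
      (B c / P * negMulLog (A b) + A b / P * negMulLog (B c)
        - A b * B c / (P * P) * negMulLog P) := by
    refine Finset.sum_congr rfl fun b _ => Finset.sum_congr rfl fun c _ => ?_
    rw [hC b c]
    exact negMulLog_mul_div (hA0 b) (hB0 c) hP
  have s1 : ∑ b, ∑ c, B c / P * negMulLog (A b) = ∑ b, negMulLog (A b) := by
    refine Finset.sum_congr rfl fun b _ => ?_
    rw [← Finset.sum_mul, ← Finset.sum_div, hsB, div_self hP.ne', one_mul]
  have s2 : ∑ b, ∑ c, A b / P * negMulLog (B c) = ∑ c, negMulLog (B c) := by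
    rw [Finset.sum_comm]
    refine Finset.sum_congr rfl fun c _ => ?_
    rw [← Finset.sum_mul, ← Finset.sum_div, hsA, div_self hP.ne', one_mul]
  have s3 : ∑ b, ∑ c, A b * B c / (P * P) * negMulLog P = negMulLog P := by
    have hcoef : ∑ b, ∑ c, A b * B c / (P * P) = 1 := by
      rw [sum_sum_mul_div, hsA, hsB]
      field_simp
    calc ∑ b, ∑ c, A b * B c / (P * P) * negMulLog P
        = (∑ b, ∑ c, A b * B c / (P * P)) * negMulLog P := by
          rw [Finset.sum_mul]; exact Finset.sum_congr rfl fun b _ => by rw [Finset.sum_mul]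
      _ = negMulLog P := by rw [hcoef, one_mul]
  rw [step]
  simp only [Finset.sum_add_distrib, Finset.sum_sub_distrib]
  rw [s1, s2, s3]

lemma sum2 {β δ M : Type*} [Fintype β] [Fintype δ] [AddCommMonoid M] (F : β × δ → M) :
    ∑ v : β × δ, F v = ∑ d, ∑ b, F (b, d) := by
  rw [Fintype.sum_prod_type]; exact Finset.sum_comm

lemma sum3 {β γ δ M : Type*} [Fintype β] [Fintype γ] [Fintype δ] [AddCommMonoid M]
    (F : β × γ × δ → M) :
    ∑ v : β × γ × δ, F v = ∑ d, ∑ b, ∑ c, F (b, (c, d)) := by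
  rw [Fintype.sum_prod_type]
  calc ∑ b, ∑ v2 : γ × δ, F (b, v2) = ∑ b, ∑ c, ∑ d, F (b, (c, d)) := by
        exact Finset.sum_congr rfl fun b _ => by rw [Fintype.sum_prod_type]
    _ = ∑ b, ∑ d, ∑ c, F (b, (c, d)) := Finset.sum_congr rfl fun b _ => Finset.sum_comm
    _ = ∑ d, ∑ b, ∑ c, F (b, (c, d)) := Finset.sum_comm

noncomputable def I3 (w : α → ℝ) {β γ δ : Type*} [Fintype β] [Fintype γ] [Fintype δ]
    (f : α → β) (g : α → γ) (k : α → δ) : ℝ :=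
  Hw w (fun a => (f a, k a)) + Hw w (fun a => (g a, k a))
    - Hw w (fun a => (f a, (g a, k a))) - Hw w k

noncomputable def I2 (w : α → ℝ) {β γ : Type*} [Fintype β] [Fintype γ]
    (f : α → β) (g : α → γ) : ℝ :=
  Hw w f + Hw w g - Hw w (fun a => (f a, g a))

lemma Hw_reorg3 {β γ δ : Type*} [Fintype β] [Fintype γ] [Fintype δ]
    (f : α → β) (g : α → γ) (k : α → δ) :
    Hw w (fun a => (f a, (g a, k a)))
      = ∑ d, ∑ b, ∑ c, negMulLog (pS w (fun a => (f a, (g a, k a))) (b, (c, d))) := by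
  unfold Hw; exact sum3 _

lemma Hw_reorg2 {β δ : Type*} [Fintype β] [Fintype δ] (f : α → β) (k : α → δ) :
    Hw w (fun a => (f a, k a))
      = ∑ d, ∑ b, negMulLog (pS w (fun a => (f a, k a)) (b, d)) := by
  unfold Hw; exact sum2 _

lemma I3_nonneg (hw : ∀ a, 0 ≤ w a) {β γ δ : Type*} [Fintype β] [Fintype γ] [Fintype δ]
    (f : α → β) (g : α → γ) (k : α → δ) : 0 ≤ I3 w f g k := by
  unfold I3
  have per : ∀ d : δ,
      (∑ b, ∑ c, negMulLog (pS w (fun a => (f a, (g a, k a))) (b, (c, d))))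
        + negMulLog (pS w k d)
      ≤ (∑ b, negMulLog (pS w (fun a => (f a, k a)) (b, d)))
        + ∑ c, negMulLog (pS w (fun a => (g a, k a)) (c, d)) := by
    intro d
    refine gibbs_le _ _ _ _ (fun b c => pS_nonneg hw _ _)
      (fun b => (marg_mid f g k b d).symm)
      (fun c => (marg_fst f (fun a => (g a, k a)) (c, d)).symm)
      (marg_fst f k d).symm
  have H := Finset.sum_le_sum (fun d (_ : d ∈ Finset.univ) => per d)
  rw [Finset.sum_add_distrib, Finset.sum_add_distrib] at H
  rw [Hw_reorg3 f g k, Hw_reorg2 f k, Hw_reorg2 g k]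
  unfold Hw
  linarith

lemma I3_eq_zero_of_ci (hw : ∀ a, 0 ≤ w a) {β γ δ : Type*} [Fintype β] [Fintype γ] [Fintype δ]
    (f : α → β) (g : α → γ) (k : α → δ)
    (hci : ∀ b c d, pS w (fun a => (f a, (g a, k a))) (b, (c, d)) * pS w k d
      = pS w (fun a => (f a, k a)) (b, d) * pS w (fun a => (g a, k a)) (c, d)) :
    I3 w f g k = 0 := by
  unfold I3
  have per : ∀ d : δ,
      (∑ b, ∑ c, negMulLog (pS w (fun a => (f a, (g a, k a))) (b, (c, d))))
      = (∑ b, negMulLog (pS w (fun a => (f a, k a)) (b, d)))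
        + (∑ c, negMulLog (pS w (fun a => (g a, k a)) (c, d)))
        - negMulLog (pS w k d) := by
    intro d
    by_cases hP0 : pS w k d = 0
    · have hA0 : ∀ b, pS w (fun a => (f a, k a)) (b, d) = 0 := fun b =>
        le_antisymm (hP0 ▸ pS_mono hw (fun a h => congrArg Prod.snd h)) (pS_nonneg hw _ _)
      have hB0 : ∀ c, pS w (fun a => (g a, k a)) (c, d) = 0 := fun c =>
        le_antisymm (hP0 ▸ pS_mono hw (fun a h => congrArg Prod.snd h)) (pS_nonneg hw _ _)
      have hC0 : ∀ b c, pS w (fun a => (f a, (g a, k a))) (b, (c, d)) = 0 := fun b c =>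
        le_antisymm
          (hP0 ▸ pS_mono hw (fun a h => congrArg (fun p => p.2.2) h)) (pS_nonneg hw _ _)
      simp [hA0, hB0, hC0, hP0]
    · have hPpos : 0 < pS w k d := lt_of_le_of_ne (pS_nonneg hw _ _) (Ne.symm hP0)
      refine gibbs_eq _ _ _ _ (fun b => pS_nonneg hw _ _) (fun c => pS_nonneg hw _ _) hPpos
        (fun b c => (eq_div_iff hP0).mpr (hci b c d))
        (marg_fst f k d) (marg_fst g k d)
  have H : ∑ d, ((∑ b, ∑ c, negMulLog (pS w (fun a => (f a, (g a, k a))) (b, (c, d)))))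
      = ∑ d, ((∑ b, negMulLog (pS w (fun a => (f a, k a)) (b, d)))
        + (∑ c, negMulLog (pS w (fun a => (g a, k a)) (c, d)))
        - negMulLog (pS w k d)) :=
    Finset.sum_congr rfl fun d _ => per d
  rw [Finset.sum_sub_distrib, Finset.sum_add_distrib] at H
  rw [Hw_reorg3 f g k, Hw_reorg2 f k, Hw_reorg2 g k]
  unfold Hw
  linarith

section Juggle
variable {β γ δ ε : Type*} [Fintype β] [Fintype γ] [Fintype δ] [Fintype ε]

lemma Hw_swap (f : α → β) (g : α → γ) :
    Hw w (fun a => (f a, g a)) = Hw w (fun a => (g a, f a)) :=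
  Hw_congr (⟨fun p => (p.2, p.1), fun p => (p.2, p.1), fun p => rfl, fun p => rfl⟩ :
    γ × β ≃ β × γ) (fun a => (g a, f a))

lemma I3_symm (f : α → β) (g : α → γ) (k : α → δ) : I3 w f g k = I3 w g f k := by
  unfold I3
  have h1 : Hw w (fun a => (f a, (g a, k a))) = Hw w (fun a => (g a, (f a, k a))) :=
    (Hw_congr (⟨fun p => (p.2.1, (p.1, p.2.2)), fun p => (p.2.1, (p.1, p.2.2)),
      fun p => rfl, fun p => rfl⟩ : β × γ × δ ≃ γ × β × δ) (fun a => (f a, (g a, k a)))).symm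
  rw [h1]; ring

lemma I3_chain (f : α → β) (g₁ : α → γ) (g₂ : α → ε) (k : α → δ) :
    I3 w f (fun a => (g₁ a, g₂ a)) k
      = I3 w f g₂ k + I3 w f g₁ (fun a => (g₂ a, k a)) := by
  unfold I3
  have e1 : Hw w (fun a => (g₁ a, (g₂ a, k a))) = Hw w (fun a => ((g₁ a, g₂ a), k a)) :=
    Hw_congr (Equiv.prodAssoc γ ε δ) (fun a => ((g₁ a, g₂ a), k a))
  have e2 : Hw w (fun a => (f a, (g₁ a, (g₂ a, k a))))
      = Hw w (fun a => (f a, ((g₁ a, g₂ a), k a))) :=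
    Hw_congr ((Equiv.refl β).prodCongr (Equiv.prodAssoc γ ε δ))
      (fun a => (f a, ((g₁ a, g₂ a), k a)))
  rw [e1, e2]; ring

lemma I2_chain (f : α → β) (g₁ : α → γ) (g₂ : α → ε) :
    I2 w f (fun a => (g₁ a, g₂ a)) = I2 w f g₂ + I3 w f g₁ g₂ := by
  unfold I2 I3
  ring

lemma I2_symm (f : α → β) (g : α → γ) : I2 w f g = I2 w g f := by
  unfold I2
  rw [Hw_swap f g]; ring

lemma I2_swap_right (f : α → β) (g₁ : α → γ) (g₂ : α → ε) :
    I2 w f (fun a => (g₁ a, g₂ a)) = I2 w f (fun a => (g₂ a, g₁ a)) := by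
  unfold I2
  have e1 : Hw w (fun a => (g₁ a, g₂ a)) = Hw w (fun a => (g₂ a, g₁ a)) := Hw_swap g₁ g₂
  have e2 : Hw w (fun a => (f a, (g₁ a, g₂ a))) = Hw w (fun a => (f a, (g₂ a, g₁ a))) :=
    (Hw_congr (⟨fun p => (p.1, (p.2.2, p.2.1)), fun p => (p.1, (p.2.2, p.2.1)),
      fun p => rfl, fun p => rfl⟩ : β × ε × γ ≃ β × γ × ε)
      (fun a => (f a, (g₂ a, g₁ a))))
  rw [e1, e2]

lemma I3_swap_mid (f : α → β) (g₁ : α → γ) (g₂ : α → ε) (k : α → δ) :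
    I3 w f (fun a => (g₁ a, g₂ a)) k = I3 w f (fun a => (g₂ a, g₁ a)) k := by
  unfold I3
  have e1 : Hw w (fun a => ((g₁ a, g₂ a), k a)) = Hw w (fun a => ((g₂ a, g₁ a), k a)) :=
    (Hw_congr (⟨fun p => ((p.1.2, p.1.1), p.2), fun p => ((p.1.2, p.1.1), p.2),
      fun p => rfl, fun p => rfl⟩ : (ε × γ) × δ ≃ (γ × ε) × δ)
      (fun a => ((g₂ a, g₁ a), k a)))
  have e2 : Hw w (fun a => (f a, ((g₁ a, g₂ a), k a)))
      = Hw w (fun a => (f a, ((g₂ a, g₁ a), k a))) :=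
    (Hw_congr (⟨fun p => (p.1, ((p.2.1.2, p.2.1.1), p.2.2)),
      fun p => (p.1, ((p.2.1.2, p.2.1.1), p.2.2)),
      fun p => rfl, fun p => rfl⟩ : β × (ε × γ) × δ ≃ β × (γ × ε) × δ)
      (fun a => (f a, ((g₂ a, g₁ a), k a))))
  rw [e1, e2]

lemma I3_func_zero (f : α → β) (g : α → γ) (k : α → δ) (φ : δ → γ)
    (h : ∀ a, w a ≠ 0 → g a = φ (k a)) : I3 w f g k = 0 := by
  unfold I3
  have e1 : Hw w (fun a => (g a, k a)) = Hw w k := by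
    rw [Hw_swap g k]
    exact Hw_pair_of_func k g φ h
  have e2 : Hw w (fun a => (f a, (g a, k a))) = Hw w (fun a => (f a, k a)) := by
    have h' : ∀ a, w a ≠ 0 → g a = (φ ∘ Prod.snd) ((f a, k a)) := fun a ha => h a ha
    have base : Hw w (fun a => ((f a, k a), g a)) = Hw w (fun a => (f a, k a)) :=
      Hw_pair_of_func (fun a => (f a, k a)) g (φ ∘ Prod.snd) h'
    rw [← base]
    exact (Hw_congr (⟨fun p => ((p.1, p.2.2), p.2.1), fun q => (q.1.1, (q.2, q.1.2)),
      fun p => rfl, fun q => rfl⟩ : β × γ × δ ≃ (β × δ) × γ)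
      (fun a => (f a, (g a, k a)))).symm
  rw [e1, e2]; ring

end Juggle
universe u

lemma exists_W {α : Type*} [Fintype α] {w : α → ℝ} (hw : ∀ a, 0 ≤ w a)
    {SX : Type u} {SZ SU : Type*} [Fintype SX] [Nonempty SX] [Fintype SU]
    (X : α → SX) (Z : α → SZ) (U : α → SU)
    (h1 : ∀ x z u, pS w (fun a => (X a, (Z a, U a))) (x, (z, u)) * pS w U u
        = pS w (fun a => (X a, U a)) (x, u) * pS w (fun a => (Z a, U a)) (z, u))
    (h2 : ∀ z u x, pS w (fun a => (Z a, (U a, X a))) (z, (u, x)) * pS w X x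
        = pS w (fun a => (Z a, X a)) (z, x) * pS w (fun a => (U a, X a)) (u, x)) :
    ∃ (κ : Type u) (_ : Fintype κ) (φ : SX → κ) (ψ : SU → κ),
      (∀ a, w a ≠ 0 → ψ (U a) = φ (X a)) ∧
      (∀ (z : SZ) (c : SX × SU) (k' : κ),
        pS w (fun a => (Z a, ((X a, U a), φ (X a)))) (z, (c, k'))
            * pS w (fun a => φ (X a)) k'
          = pS w (fun a => (Z a, φ (X a))) (z, k')
            * pS w (fun a => ((X a, U a), φ (X a))) (c, k')) := by
  classical
  set r : SX → SX → Prop := fun x x' =>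
    ∃ u, pS w (fun a => (X a, U a)) (x, u) ≠ 0 ∧ pS w (fun a => (X a, U a)) (x', u) ≠ 0 with hrdef
  let s : Setoid SX := EqvGen.setoid r
  letI : DecidableRel ((· ≈ ·) : SX → SX → Prop) := fun a b => Classical.propDecidable _
  let φ : SX → Quotient s := fun x => Quotient.mk s x
  let ψ : SU → Quotient s := fun u =>
    if h : ∃ x', pS w (fun a => (X a, U a)) (x', u) ≠ 0 then φ h.choose
    else φ (Classical.arbitrary SX)
  have marg_ne : ∀ x u, pS w (fun a => (X a, U a)) (x, u) ≠ 0 →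
      pS w X x ≠ 0 ∧ pS w U u ≠ 0 := by
    intro x u hxu
    exact ⟨fun h0 => hxu (pS_eq_zero hw (fun a ha => congrArg Prod.fst ha) h0),
      fun h0 => hxu (pS_eq_zero hw (fun a ha => congrArg Prod.snd ha) h0)⟩
  have base : ∀ x u, pS w (fun a => (X a, U a)) (x, u) ≠ 0 → ∀ z,
      pS w (fun a => (Z a, X a)) (z, x) * pS w U u
        = pS w (fun a => (Z a, U a)) (z, u) * pS w X x := by
    intro x u hxu z
    have e1 : pS w (fun a => (X a, (Z a, U a))) (x, (z, u))
        = pS w (fun a => (Z a, (U a, X a))) (z, (u, x)) :=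
      pS_congr fun a => by simp only [Prod.mk.injEq]; tauto
    have e2 : pS w (fun a => (U a, X a)) (u, x) = pS w (fun a => (X a, U a)) (x, u) :=
      pS_congr fun a => by simp only [Prod.mk.injEq]; tauto
    have H2 := h2 z u x
    rw [e2] at H2
    have H1 := h1 x z u
    rw [e1] at H1
    refine mul_right_cancel₀ hxu ?_
    linear_combination pS w X x * H1 - pS w U u * H2
  have key : ∀ x x' : SX, EqvGen r x x' →
      ((∀ z, pS w (fun a => (Z a, X a)) (z, x) * pS w X x'
          = pS w (fun a => (Z a, X a)) (z, x') * pS w X x)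
        ∧ (pS w X x = 0 ↔ pS w X x' = 0)) := by
    intro x x' h
    induction h with
    | rel x y hxy =>
      obtain ⟨u, hxu, hyu⟩ := hxy
      have hx := (marg_ne _ _ hxu).1
      have hu := (marg_ne _ _ hxu).2
      have hy := (marg_ne _ _ hyu).1
      refine ⟨fun z => ?_, by simp [hx, hy]⟩
      have b1 := base x u hxu z
      have b2 := base y u hyu z
      refine mul_right_cancel₀ hu ?_
      linear_combination pS w X y * b1 - pS w X x * b2
    | refl x => exact ⟨fun z => rfl, Iff.rfl⟩
    | symm x y _ ih => exact ⟨fun z => (ih.1 z).symm, ih.2.symm⟩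
    | trans x y x' _ _ ih1 ih2 =>
      refine ⟨fun z => ?_, ih1.2.trans ih2.2⟩
      by_cases hy : pS w X y = 0
      · rw [ih1.2.mpr hy, ih2.2.mp hy]; ring
      · refine mul_right_cancel₀ hy ?_
        linear_combination pS w X x' * ih1.1 z + pS w X x * ih2.1 z
  have hEq : ∀ x x' : SX, φ x = φ x' → ∀ z,
      pS w (fun a => (Z a, X a)) (z, x) * pS w X x'
        = pS w (fun a => (Z a, X a)) (z, x') * pS w X x := by
    intro x x' h
    exact (key x x' (Quotient.exact h)).1
  have hψspec : ∀ x u, pS w (fun a => (X a, U a)) (x, u) ≠ 0 → ψ u = φ x := by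
    intro x u hxu
    have hex : ∃ x', pS w (fun a => (X a, U a)) (x', u) ≠ 0 := ⟨x, hxu⟩
    show dite _ _ _ = _
    rw [dif_pos hex]
    exact Quotient.sound (EqvGen.rel _ _ ⟨u, hex.choose_spec, hxu⟩)
  have compA : ∀ z x u k', pS w (fun a => (Z a, ((X a, U a), φ (X a)))) (z, ((x, u), k'))
      = if φ x = k' then pS w (fun a => (Z a, (X a, U a))) (z, (x, u)) else 0 := by
    intro z x u k'
    by_cases hk : φ x = k'
    · rw [if_pos hk]
      refine pS_congr fun a => ?_
      simp only [Prod.mk.injEq]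
      constructor
      · rintro ⟨hz, ⟨hx, hu⟩, -⟩; exact ⟨hz, hx, hu⟩
      · rintro ⟨hz, hx, hu⟩; exact ⟨hz, ⟨hx, hu⟩, by rw [hx, hk]⟩
    · rw [if_neg hk]
      refine pS_eq_zero_of_none fun a hcond => ?_
      simp only [Prod.mk.injEq] at hcond
      exact hk (by rw [← hcond.2.1.1]; exact hcond.2.2)
  have compB : ∀ x u k', pS w (fun a => ((X a, U a), φ (X a))) ((x, u), k')
      = if φ x = k' then pS w (fun a => (X a, U a)) (x, u) else 0 := by
    intro x u k'
    by_cases hk : φ x = k'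
    · rw [if_pos hk]
      refine pS_congr fun a => ?_
      simp only [Prod.mk.injEq]
      constructor
      · rintro ⟨⟨hx, hu⟩, -⟩; exact ⟨hx, hu⟩
      · rintro ⟨hx, hu⟩; exact ⟨⟨hx, hu⟩, by rw [hx, hk]⟩
    · rw [if_neg hk]
      refine pS_eq_zero_of_none fun a hcond => ?_
      simp only [Prod.mk.injEq] at hcond
      exact hk (by rw [← hcond.1.1]; exact hcond.2)
  have compC : ∀ z k', pS w (fun a => (Z a, φ (X a))) (z, k')
      = ∑ x', (if φ x' = k' then pS w (fun a => (Z a, X a)) (z, x') else 0) := by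
    intro z k'
    rw [← marg_mid (w := w) Z X (fun a => φ (X a)) z k']
    refine Finset.sum_congr rfl fun x' _ => ?_
    by_cases hk : φ x' = k'
    · rw [if_pos hk]
      refine pS_congr fun a => ?_
      simp only [Prod.mk.injEq]
      constructor
      · rintro ⟨hz, hx, -⟩; exact ⟨hz, hx⟩
      · rintro ⟨hz, hx⟩; exact ⟨hz, hx, by rw [hx, hk]⟩
    · rw [if_neg hk]
      refine pS_eq_zero_of_none fun a hcond => ?_
      simp only [Prod.mk.injEq] at hcond
      exact hk (by rw [← hcond.2.1]; exact hcond.2.2)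
  have compD : ∀ k', pS w (fun a => φ (X a)) k'
      = ∑ x', (if φ x' = k' then pS w X x' else 0) := by
    intro k'
    rw [← marg_fst (w := w) X (fun a => φ (X a)) k']
    refine Finset.sum_congr rfl fun x' _ => ?_
    by_cases hk : φ x' = k'
    · rw [if_pos hk]
      refine pS_congr fun a => ?_
      simp only [Prod.mk.injEq]
      constructor
      · rintro ⟨hx, -⟩; exact hx
      · intro hx; exact ⟨hx, by rw [hx, hk]⟩
    · rw [if_neg hk]
      refine pS_eq_zero_of_none fun a hcond => ?_
      simp only [Prod.mk.injEq] at hcond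
      exact hk (by rw [← hcond.1]; exact hcond.2)
  refine ⟨Quotient s, inferInstance, φ, ψ, ?_, ?_⟩
  · intro a ha
    refine hψspec (X a) (U a) fun h0 => ?_
    have hle := le_pS hw (fun a' => (X a', U a')) a
    rw [h0] at hle
    exact ha (le_antisymm hle (hw a))
  · rintro z ⟨x, u⟩ k'
    rw [compA, compB, compC, compD]
    by_cases hk : φ x = k'
    · rw [if_pos hk, if_pos hk, Finset.mul_sum, Finset.sum_mul]
      refine Finset.sum_congr rfl fun x' _ => ?_
      rcases eq_or_ne (φ x') k' with hk' | hk'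
      · rw [if_pos hk', if_pos hk']
        by_cases hxu : pS w (fun a => (X a, U a)) (x, u) = 0
        · have hz : pS w (fun a => (Z a, (X a, U a))) (z, (x, u)) = 0 :=
            pS_eq_zero hw (fun a ha => congrArg Prod.snd ha) hxu
          rw [hz, hxu]; ring
        · have hx := (marg_ne x u hxu).1
          have hE := hEq x x' (hk.trans hk'.symm) z
          have H2 := h2 z u x
          have e1 : pS w (fun a => (Z a, (U a, X a))) (z, (u, x))
              = pS w (fun a => (Z a, (X a, U a))) (z, (x, u)) :=
            pS_congr fun a => by simp only [Prod.mk.injEq]; tauto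
          have e2 : pS w (fun a => (U a, X a)) (u, x)
              = pS w (fun a => (X a, U a)) (x, u) :=
            pS_congr fun a => by simp only [Prod.mk.injEq]; tauto
          rw [e1, e2] at H2
          refine mul_right_cancel₀ hx ?_
          linear_combination pS w X x' * H2 + pS w (fun a => (X a, U a)) (x, u) * hE
      · rw [if_neg hk', if_neg hk']; ring
    · rw [if_neg hk, if_neg hk]; ring

lemma bridge {Ω : Type*} [MeasurableSpace Ω] (μ : Measure Ω) [IsProbabilityMeasure μ]
    {α : Type*} [Fintype α] (ξ : Ω → α) (hmeas : ∀ a : α, MeasurableSet {ω | ξ ω = a})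
    {β : Type*} (F : α → β) (b : β) :
    (μ {ω | F (ξ ω) = b}).toReal = pS (fun a => (μ {ω | ξ ω = a}).toReal) F b := by
  classical
  have hset : {ω | F (ξ ω) = b}
      = ⋃ a ∈ Finset.univ.filter (fun a => F a = b), {ω | ξ ω = a} := by
    ext ω
    simp only [Set.mem_setOf_eq, Set.mem_iUnion, Finset.mem_filter, Finset.mem_univ, true_and,
      exists_prop]
    exact ⟨fun h => ⟨ξ ω, h, rfl⟩, fun ⟨a, ha, h⟩ => by rw [h]; exact ha⟩
  rw [hset, measure_biUnion_finset ?_ (fun a _ => hmeas a)]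
  · rw [ENNReal.toReal_sum (fun a _ => measure_ne_top μ _)]
    unfold pS
    rw [Finset.sum_filter]
  · intro a _ a' _ haa'
    simp only [Function.onFun]
    refine Set.disjoint_left.mpr fun ω h h' => haa' ?_
    rw [← h, ← h']

lemma entropy_bridge {Ω : Type*} [MeasurableSpace Ω] (μ : Measure Ω) [IsProbabilityMeasure μ]
    {α : Type*} [Fintype α] (ξ : Ω → α) (hmeas : ∀ a : α, MeasurableSet {ω | ξ ω = a})
    {β : Type*} [Fintype β] (F : α → β) :
    entropyOf μ (fun ω => F (ξ ω)) = Hw (fun a => (μ {ω | ξ ω = a}).toReal) F := by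
  unfold entropyOf probOf Hw
  exact Finset.sum_congr rfl fun b _ => by rw [bridge μ ξ hmeas F b]

end CIng4

/-- Statement: the fourth conditional Ingleton inequality. -/
theorem conditional_ingleton_4cI
    {Ω : Type*} [MeasurableSpace Ω] (μ : Measure Ω) [IsProbabilityMeasure μ]
    {SX SY SZ SU : Type*}
    [Fintype SX] [Nonempty SX] [MeasurableSpace SX] [MeasurableSingletonClass SX]
    [Fintype SY] [Nonempty SY] [MeasurableSpace SY] [MeasurableSingletonClass SY]
    [Fintype SZ] [Nonempty SZ] [MeasurableSpace SZ] [MeasurableSingletonClass SZ]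
    [Fintype SU] [Nonempty SU] [MeasurableSpace SU] [MeasurableSingletonClass SU]
    (ξX : Ω → SX) (ξY : Ω → SY) (ξZ : Ω → SZ) (ξU : Ω → SU)
    (mX : Measurable ξX) (mY : Measurable ξY) (mZ : Measurable ξZ) (mU : Measurable ξU)
    (h1 : CondIndepRV μ ξX ξZ ξU) (h2 : CondIndepRV μ ξZ ξU ξX) :
    0 ≤ ingletonEnt μ ξX ξY ξZ ξU := by
  classical
  open CIng4 in
  let A4 := SX × SY × SZ × SU
  let ξ : Ω → A4 := fun ω => (ξX ω, ξY ω, ξZ ω, ξU ω)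
  let w : A4 → ℝ := fun a => (μ {ω | ξ ω = a}).toReal
  have hmeas : ∀ a : A4, MeasurableSet {ω | ξ ω = a} := by
    intro a
    have hset : {ω | ξ ω = a} =
        ξX ⁻¹' {a.1} ∩ (ξY ⁻¹' {a.2.1} ∩ (ξZ ⁻¹' {a.2.2.1} ∩ ξU ⁻¹' {a.2.2.2})) := by
      ext ω
      show (ξX ω, ξY ω, ξZ ω, ξU ω) = a ↔ _
      simp [Prod.ext_iff, and_assoc]
    rw [hset]
    exact (mX (measurableSet_singleton _)).inter ((mY (measurableSet_singleton _)).inter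
      ((mZ (measurableSet_singleton _)).inter (mU (measurableSet_singleton _))))
  have hw : ∀ a, 0 ≤ w a := fun a => ENNReal.toReal_nonneg
  let X' : A4 → SX := fun a => a.1
  let Y' : A4 → SY := fun a => a.2.1
  let Z' : A4 → SZ := fun a => a.2.2.1
  let U' : A4 → SU := fun a => a.2.2.2
  -- bridge the conditional independence hypotheses to the weight level
  have h1' : ∀ x z u, pS w (fun a : A4 => (a.1, (a.2.2.1, a.2.2.2))) (x, (z, u))
        * pS w (fun a : A4 => a.2.2.2) u
      = pS w (fun a : A4 => (a.1, a.2.2.2)) (x, u)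
        * pS w (fun a : A4 => (a.2.2.1, a.2.2.2)) (z, u) := by
    intro x z u
    have T := congrArg ENNReal.toReal (h1 x z u)
    rw [ENNReal.toReal_mul, ENNReal.toReal_mul] at T
    have s1 : {ω | ξX ω = x ∧ ξZ ω = z ∧ ξU ω = u}
        = {ω | (fun a : A4 => (a.1, (a.2.2.1, a.2.2.2))) (ξ ω) = (x, (z, u))} := by
      ext ω
      show _ ↔ (ξX ω, (ξZ ω, ξU ω)) = (x, (z, u))
      simp [Prod.ext_iff]
    have s2 : {ω | ξU ω = u} = {ω | (fun a : A4 => a.2.2.2) (ξ ω) = u} := rfl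
    have s3 : {ω | ξX ω = x ∧ ξU ω = u}
        = {ω | (fun a : A4 => (a.1, a.2.2.2)) (ξ ω) = (x, u)} := by
      ext ω
      show _ ↔ (ξX ω, ξU ω) = (x, u)
      simp [Prod.ext_iff]
    have s4 : {ω | ξZ ω = z ∧ ξU ω = u}
        = {ω | (fun a : A4 => (a.2.2.1, a.2.2.2)) (ξ ω) = (z, u)} := by
      ext ω
      show _ ↔ (ξZ ω, ξU ω) = (z, u)
      simp [Prod.ext_iff]
    rw [s1, s2, s3, s4] at T
    rw [bridge μ ξ hmeas (fun a : A4 => (a.1, (a.2.2.1, a.2.2.2))) (x, (z, u)),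
      bridge μ ξ hmeas (fun a : A4 => a.2.2.2) u,
      bridge μ ξ hmeas (fun a : A4 => (a.1, a.2.2.2)) (x, u),
      bridge μ ξ hmeas (fun a : A4 => (a.2.2.1, a.2.2.2)) (z, u)] at T
    exact T
  have h2' : ∀ z u x, pS w (fun a : A4 => (a.2.2.1, (a.2.2.2, a.1))) (z, (u, x))
        * pS w (fun a : A4 => a.1) x
      = pS w (fun a : A4 => (a.2.2.1, a.1)) (z, x)
        * pS w (fun a : A4 => (a.2.2.2, a.1)) (u, x) := by
    intro z u x
    have T := congrArg ENNReal.toReal (h2 z u x)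
    rw [ENNReal.toReal_mul, ENNReal.toReal_mul] at T
    have s1 : {ω | ξZ ω = z ∧ ξU ω = u ∧ ξX ω = x}
        = {ω | (fun a : A4 => (a.2.2.1, (a.2.2.2, a.1))) (ξ ω) = (z, (u, x))} := by
      ext ω
      show _ ↔ (ξZ ω, (ξU ω, ξX ω)) = (z, (u, x))
      simp [Prod.ext_iff]
    have s2 : {ω | ξX ω = x} = {ω | (fun a : A4 => a.1) (ξ ω) = x} := rfl
    have s3 : {ω | ξZ ω = z ∧ ξX ω = x}
        = {ω | (fun a : A4 => (a.2.2.1, a.1)) (ξ ω) = (z, x)} := by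
      ext ω
      show _ ↔ (ξZ ω, ξX ω) = (z, x)
      simp [Prod.ext_iff]
    have s4 : {ω | ξU ω = u ∧ ξX ω = x}
        = {ω | (fun a : A4 => (a.2.2.2, a.1)) (ξ ω) = (u, x)} := by
      ext ω
      show _ ↔ (ξU ω, ξX ω) = (u, x)
      simp [Prod.ext_iff]
    rw [s1, s2, s3, s4] at T
    rw [bridge μ ξ hmeas (fun a : A4 => (a.2.2.1, (a.2.2.2, a.1))) (z, (u, x)),
      bridge μ ξ hmeas (fun a : A4 => a.1) x,
      bridge μ ξ hmeas (fun a : A4 => (a.2.2.1, a.1)) (z, x),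
      bridge μ ξ hmeas (fun a : A4 => (a.2.2.2, a.1)) (u, x)] at T
    exact T
  -- obtain the common refinement variable W
  obtain ⟨κ, hκ, φ, ψ, hae, hciW⟩ := exists_W hw X' Z' U' h1' h2'
  haveI : Fintype κ := hκ
  let W' : A4 → κ := fun a => φ (X' a)
  -- entropy bridges
  have eH1 : entropyOf μ (fun ω => (ξX ω, ξY ω)) = Hw w (fun a : A4 => (a.1, a.2.1)) :=
    entropy_bridge μ ξ hmeas (fun a : A4 => (a.1, a.2.1))
  have eH2 : entropyOf μ (fun ω => (ξX ω, ξZ ω)) = Hw w (fun a : A4 => (a.1, a.2.2.1)) :=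
    entropy_bridge μ ξ hmeas (fun a : A4 => (a.1, a.2.2.1))
  have eH3 : entropyOf μ (fun ω => (ξX ω, ξU ω)) = Hw w (fun a : A4 => (a.1, a.2.2.2)) :=
    entropy_bridge μ ξ hmeas (fun a : A4 => (a.1, a.2.2.2))
  have eH4 : entropyOf μ (fun ω => (ξY ω, ξZ ω)) = Hw w (fun a : A4 => (a.2.1, a.2.2.1)) :=
    entropy_bridge μ ξ hmeas (fun a : A4 => (a.2.1, a.2.2.1))
  have eH5 : entropyOf μ (fun ω => (ξY ω, ξU ω)) = Hw w (fun a : A4 => (a.2.1, a.2.2.2)) :=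
    entropy_bridge μ ξ hmeas (fun a : A4 => (a.2.1, a.2.2.2))
  have eH6 : entropyOf μ (fun ω => (ξZ ω, ξU ω)) = Hw w (fun a : A4 => (a.2.2.1, a.2.2.2)) :=
    entropy_bridge μ ξ hmeas (fun a : A4 => (a.2.2.1, a.2.2.2))
  have eH7 : entropyOf μ ξZ = Hw w (fun a : A4 => a.2.2.1) :=
    entropy_bridge μ ξ hmeas (fun a : A4 => a.2.2.1)
  have eH8 : entropyOf μ ξU = Hw w (fun a : A4 => a.2.2.2) :=
    entropy_bridge μ ξ hmeas (fun a : A4 => a.2.2.2)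
  have eH9 : entropyOf μ (fun ω => (ξX ω, ξZ ω, ξU ω))
      = Hw w (fun a : A4 => (a.1, (a.2.2.1, a.2.2.2))) :=
    entropy_bridge μ ξ hmeas (fun a : A4 => (a.1, (a.2.2.1, a.2.2.2)))
  have eH10 : entropyOf μ (fun ω => (ξY ω, ξZ ω, ξU ω))
      = Hw w (fun a : A4 => (a.2.1, (a.2.2.1, a.2.2.2))) :=
    entropy_bridge μ ξ hmeas (fun a : A4 => (a.2.1, (a.2.2.1, a.2.2.2)))
  -- relabelling equalities
  have sw1 : Hw w (fun a : A4 => (a.2.2.1, a.1)) = Hw w (fun a : A4 => (a.1, a.2.2.1)) :=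
    Hw_swap (fun a : A4 => a.2.2.1) (fun a : A4 => a.1)
  have sw2 : Hw w (fun a : A4 => (a.2.2.2, a.1)) = Hw w (fun a : A4 => (a.1, a.2.2.2)) :=
    Hw_swap (fun a : A4 => a.2.2.2) (fun a : A4 => a.1)
  have sw3 : Hw w (fun a : A4 => (a.2.2.1, a.2.1)) = Hw w (fun a : A4 => (a.2.1, a.2.2.1)) :=
    Hw_swap (fun a : A4 => a.2.2.1) (fun a : A4 => a.2.1)
  have sw4 : Hw w (fun a : A4 => (a.2.2.2, a.2.1)) = Hw w (fun a : A4 => (a.2.1, a.2.2.2)) :=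
    Hw_swap (fun a : A4 => a.2.2.2) (fun a : A4 => a.2.1)
  have cy1 : Hw w (fun a : A4 => (a.2.2.1, (a.2.2.2, a.1)))
      = Hw w (fun a : A4 => (a.1, (a.2.2.1, a.2.2.2))) :=
    (Hw_congr (⟨fun p => (p.2.2, (p.1, p.2.1)), fun q => (q.2.1, (q.2.2, q.1)),
      fun p => rfl, fun q => rfl⟩ : SZ × SU × SX ≃ SX × SZ × SU)
      (fun a : A4 => (a.2.2.1, (a.2.2.2, a.1)))).symm
  have cy2 : Hw w (fun a : A4 => (a.2.2.1, (a.2.2.2, a.2.1)))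
      = Hw w (fun a : A4 => (a.2.1, (a.2.2.1, a.2.2.2))) :=
    (Hw_congr (⟨fun p => (p.2.2, (p.1, p.2.1)), fun q => (q.2.1, (q.2.2, q.1)),
      fun p => rfl, fun q => rfl⟩ : SZ × SU × SY ≃ SY × SZ × SU)
      (fun a : A4 => (a.2.2.1, (a.2.2.2, a.2.1)))).symm
  have hIng : ingletonEnt μ ξX ξY ξZ ξU
      = I3 w Z' U' X' + I3 w Z' U' Y' + I2 w X' Y' - I2 w Z' U' := by
    unfold ingletonEnt I3 I2
    rw [eH1, eH2, eH3, eH4, eH5, eH6, eH7, eH8, eH9, eH10, ← sw1, ← sw2, ← sw3, ← sw4,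
      ← cy1, ← cy2]
    ring
  -- the information-theoretic chain
  have hA : I3 w Z' U' X' = 0 :=
    I3_eq_zero_of_ci hw Z' U' X' (fun b c d => h2' b c d)
  have hC : I3 w Z' (fun a => (X' a, U' a)) W' = 0 :=
    I3_eq_zero_of_ci hw Z' (fun a => (X' a, U' a)) W' (fun b c d => hciW b c d)
  have c1 : I3 w Z' (fun a => (X' a, U' a)) W'
      = I3 w Z' U' W' + I3 w Z' X' (fun a => (U' a, W' a)) := I3_chain Z' X' U' W'
  have n1 : 0 ≤ I3 w Z' U' W' := I3_nonneg hw Z' U' W'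
  have n2 : 0 ≤ I3 w Z' X' (fun a => (U' a, W' a)) := I3_nonneg hw Z' X' _
  have hZUW : I3 w Z' U' W' = 0 := by linarith
  have hZWU : I3 w Z' W' U' = 0 :=
    I3_func_zero Z' W' U' ψ (fun a ha => (hae a ha).symm)
  have c2 : I2 w Z' (fun a => (U' a, W' a)) = I2 w Z' W' + I3 w Z' U' W' :=
    I2_chain Z' U' W'
  have c3 : I2 w Z' (fun a => (W' a, U' a)) = I2 w Z' U' + I3 w Z' W' U' :=
    I2_chain Z' W' U'
  have e3 : I2 w Z' (fun a => (U' a, W' a)) = I2 w Z' (fun a => (W' a, U' a)) :=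
    I2_swap_right Z' U' W'
  have facta : I2 w Z' U' = I2 w Z' W' := by linarith
  have hYWX : I3 w Y' W' X' = 0 := I3_func_zero Y' W' X' φ (fun a _ => rfl)
  have c4 : I2 w Y' (fun a => (X' a, W' a)) = I2 w Y' W' + I3 w Y' X' W' :=
    I2_chain Y' X' W'
  have c5 : I2 w Y' (fun a => (W' a, X' a)) = I2 w Y' X' + I3 w Y' W' X' :=
    I2_chain Y' W' X'
  have e4 : I2 w Y' (fun a => (X' a, W' a)) = I2 w Y' (fun a => (W' a, X' a)) :=
    I2_swap_right Y' X' W'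
  have n3 : 0 ≤ I3 w Y' X' W' := I3_nonneg hw Y' X' W'
  have factb : I2 w Y' W' ≤ I2 w Y' X' := by linarith
  have c6 : I2 w W' (fun a => (Z' a, Y' a)) = I2 w W' Y' + I3 w W' Z' Y' :=
    I2_chain W' Z' Y'
  have c7 : I2 w W' (fun a => (Y' a, Z' a)) = I2 w W' Z' + I3 w W' Y' Z' :=
    I2_chain W' Y' Z'
  have e5 : I2 w W' (fun a => (Z' a, Y' a)) = I2 w W' (fun a => (Y' a, Z' a)) :=
    I2_swap_right W' Z' Y'
  have n4 : 0 ≤ I3 w W' Y' Z' := I3_nonneg hw W' Y' Z'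
  have factc : I2 w W' Z' ≤ I2 w W' Y' + I3 w W' Z' Y' := by linarith
  have c8 : I3 w Z' (fun a => (U' a, W' a)) Y'
      = I3 w Z' W' Y' + I3 w Z' U' (fun a => (W' a, Y' a)) := I3_chain Z' U' W' Y'
  have c9 : I3 w Z' (fun a => (W' a, U' a)) Y'
      = I3 w Z' U' Y' + I3 w Z' W' (fun a => (U' a, Y' a)) := I3_chain Z' W' U' Y'
  have hZWUY : I3 w Z' W' (fun a => (U' a, Y' a)) = 0 :=
    I3_func_zero Z' W' (fun a => (U' a, Y' a)) (fun p => ψ p.1)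
      (fun a ha => (hae a ha).symm)
  have e6 : I3 w Z' (fun a => (U' a, W' a)) Y' = I3 w Z' (fun a => (W' a, U' a)) Y' :=
    I3_swap_mid Z' U' W' Y'
  have n5 : 0 ≤ I3 w Z' U' (fun a => (W' a, Y' a)) := I3_nonneg hw Z' U' _
  have factd : I3 w Z' W' Y' ≤ I3 w Z' U' Y' := by linarith
  have sy1 : I2 w X' Y' = I2 w Y' X' := I2_symm X' Y'
  have sy2 : I2 w Z' W' = I2 w W' Z' := I2_symm Z' W'
  have sy3 : I2 w W' Y' = I2 w Y' W' := I2_symm W' Y'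
  have sy4 : I3 w W' Z' Y' = I3 w Z' W' Y' := I3_symm W' Z' Y'
  rw [hIng]
  linarith
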